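/- Let G be a finite abelian group acting on finite sets X and Y, and suppose the action of G on X is transitive. Let K be a field of characteristic zero. If the permutation representations of G on the free K-vector spaces with bases X and Y are isomorphic as K-linear representations of G (i.e. there is a K-linear bijection intertwining the two G-actions), then X and Y are isomorphic as G-sets, i.e. there exists a G-equivariant bijection X → Y. -/
import Mathlib


open Finsupp LinearMap

lemma trace_lmapDomain (K : Type*) [Field K] (X : Type*) [Fintype X] [DecidableEq X]
    (σ : X → X) :
    trace K (X →₀ K) (Finsupp.lmapDomain K K σ) =
      (Finset.univ.filter (fun x => σ x = x)).card := by
  classical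
  rw [trace_eq_matrix_trace K (Finsupp.basisSingleOne) _]
  rw [Matrix.trace]
  rw [Finset.card_filter]
  push_cast
  refine Finset.sum_congr rfl fun x _ => ?_
  rw [Matrix.diag_apply, LinearMap.toMatrix_apply]
  simp only [Finsupp.coe_basisSingleOne, lmapDomain_apply, Finsupp.mapDomain_single]
  rw [Finsupp.basisSingleOne_repr]
  simp [Finsupp.single_apply, eq_comm]


/-- Two permutation representations of a finite abelian group that are isomorphic as linear
representations over a field of characteristic zero are isomorphic as permutation
representations, provided one of them is transitive. -/
theorem perm_rep_iso_of_linear_iso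
    (K : Type*) [Field K] [CharZero K]
    (G : Type*) [CommGroup G] [Finite G]
    (X Y : Type*) [Finite X] [Finite Y] [MulAction G X] [MulAction G Y]
    (htrans : MulAction.IsPretransitive G X)
    (f : (X →₀ K) ≃ₗ[K] (Y →₀ K))
    (hf : ∀ (g : G) (v : X →₀ K),
      f (Finsupp.mapDomain (fun x => g • x) v) = Finsupp.mapDomain (fun y => g • y) (f v)) :
    ∃ b : X ≃ Y, ∀ (g : G) (x : X), b (g • x) = g • b x := by
  classical
  cases nonempty_fintype X
  cases nonempty_fintype Y
  cases nonempty_fintype G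
  -- Step 1: equal fixed-point counts
  have hfix : ∀ g : G, (Finset.univ.filter fun x : X => g • x = x).card
      = (Finset.univ.filter fun y : Y => g • y = y).card := by
    intro g
    have hT : (Finsupp.lmapDomain K K (fun y : Y => g • y))
        = f.conj (Finsupp.lmapDomain K K (fun x : X => g • x)) := by
      refine LinearMap.ext fun w => ?_
      rw [LinearEquiv.conj_apply]
      simp only [LinearMap.comp_apply, LinearEquiv.coe_coe, lmapDomain_apply]
      rw [hf g (f.symm w), f.apply_symm_apply]
    have h2 := congrArg (trace K (Y →₀ K)) hT
    rw [trace_conj', trace_lmapDomain, trace_lmapDomain] at h2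
    exact_mod_cast h2.symm
  -- cardinalities agree
  have hcard : Fintype.card X = Fintype.card Y := by
    have := hfix 1
    simpa [one_smul, Finset.filter_true_of_mem] using this
  by_cases hX : Nonempty X
  · obtain ⟨x₀⟩ := hX
    have hYne : Nonempty Y := by
      have : 0 < Fintype.card Y := by
        rw [← hcard]; exact Fintype.card_pos_iff.mpr ⟨x₀⟩
      exact Fintype.card_pos_iff.mp this
    -- fact A : a fixed point on X forces fixing everything
    have factA : ∀ (g : G) (x : X), g • x = x → ∀ x' : X, g • x' = x' := by
      intro g x hx x'
      obtain ⟨h, rfl⟩ := htrans.exists_smul_eq x x'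
      rw [smul_comm, hx]
    -- Burnside: Y is pretransitive
    have hΩX : Fintype.card (MulAction.orbitRel.Quotient G X) = 1 := by
      have : Nonempty X := ⟨x₀⟩
      obtain ⟨u⟩ := (MulAction.pretransitive_iff_unique_quotient_of_nonempty G X).mp htrans
      exact Fintype.card_eq_one_iff.mpr ⟨u.default, u.uniq⟩
    have hBX := MulAction.sum_card_fixedBy_eq_card_orbits_mul_card_group G X
    have hBY := MulAction.sum_card_fixedBy_eq_card_orbits_mul_card_group G Y
    have hsum : (∑ g : G, Fintype.card (MulAction.fixedBy X g))
        = ∑ g : G, Fintype.card (MulAction.fixedBy Y g) := by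
      refine Finset.sum_congr rfl fun g _ => ?_
      have hx : Fintype.card (MulAction.fixedBy X g)
          = (Finset.univ.filter fun x : X => g • x = x).card := by
        rw [Fintype.card_subtype]; rfl
      have hy : Fintype.card (MulAction.fixedBy Y g)
          = (Finset.univ.filter fun y : Y => g • y = y).card := by
        rw [Fintype.card_subtype]; rfl
      rw [hx, hy, hfix g]
    have hΩY : Fintype.card (MulAction.orbitRel.Quotient G Y) = 1 := by
      have hGpos : 0 < Fintype.card G := Fintype.card_pos
      have : Fintype.card (MulAction.orbitRel.Quotient G Y) * Fintype.card G
          = 1 * Fintype.card G := by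
        rw [← hBY, ← hsum, hBX, hΩX]
      exact Nat.eq_of_mul_eq_mul_right hGpos this
    have htransY : MulAction.IsPretransitive G Y := by
      rw [MulAction.pretransitive_iff_subsingleton_quotient]
      exact Fintype.card_le_one_iff_subsingleton.mp (le_of_eq hΩY)
    obtain ⟨y₀⟩ := hYne
    have factAY : ∀ (g : G) (y : Y), g • y = y → ∀ y' : Y, g • y' = y' := by
      intro g y hy y'
      obtain ⟨h, rfl⟩ := htransY.exists_smul_eq y y'
      rw [smul_comm, hy]
    -- stabilizer equality
    have hstab : ∀ g : G, g • x₀ = x₀ ↔ g • y₀ = y₀ := by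
      intro g
      constructor
      · intro hx
        have hall : ∀ x : X, g • x = x := factA g x₀ hx
        have h1 : (Finset.univ.filter fun x : X => g • x = x) = Finset.univ :=
          Finset.filter_true_of_mem fun x _ => hall x
        have h2 : (Finset.univ.filter fun y : Y => g • y = y).card = Fintype.card Y := by
          rw [← hfix g, h1, Finset.card_univ, hcard]
        have h3 : (Finset.univ.filter fun y : Y => g • y = y) = Finset.univ :=
          Finset.eq_univ_of_card _ (by rw [h2])
        have := Finset.eq_univ_iff_forall.mp h3 y₀
        simpa using this
      · intro hy
        have hall : ∀ y : Y, g • y = y := factAY g y₀ hy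
        have h1 : (Finset.univ.filter fun y : Y => g • y = y) = Finset.univ :=
          Finset.filter_true_of_mem fun y _ => hall y
        have h2 : (Finset.univ.filter fun x : X => g • x = x).card = Fintype.card X := by
          rw [hfix g, h1, Finset.card_univ, hcard]
        have h3 : (Finset.univ.filter fun x : X => g • x = x) = Finset.univ :=
          Finset.eq_univ_of_card _ (by rw [h2])
        have := Finset.eq_univ_iff_forall.mp h3 x₀
        simpa using this
    have key : ∀ g g' : G, g • x₀ = g' • x₀ ↔ g • y₀ = g' • y₀ := by
      intro g g'
      have h1 : g • x₀ = g' • x₀ ↔ (g'⁻¹ * g) • x₀ = x₀ := by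
        rw [mul_smul]
        constructor
        · intro h; rw [h]; simp [← mul_smul]
        · intro h
          have := congrArg (fun z => g' • z) h
          simpa [← mul_smul] using this
      have h2 : g • y₀ = g' • y₀ ↔ (g'⁻¹ * g) • y₀ = y₀ := by
        rw [mul_smul]
        constructor
        · intro h; rw [h]; simp [← mul_smul]
        · intro h
          have := congrArg (fun z => g' • z) h
          simpa [← mul_smul] using this
      rw [h1, h2, hstab]
    -- build the map
    choose φ hφ using fun x => htrans.exists_smul_eq x₀ x
    set b : X → Y := fun x => φ x • y₀ with hb
    have hbinj : Function.Injective b := by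
      intro x x' h
      have : φ x • x₀ = φ x' • x₀ := (key _ _).mpr h
      rw [hφ, hφ] at this; exact this
    have hbsurj : Function.Surjective b := by
      intro y
      obtain ⟨g, hg⟩ := htransY.exists_smul_eq y₀ y
      refine ⟨g • x₀, ?_⟩
      have : φ (g • x₀) • x₀ = g • x₀ := hφ _
      have h2 : φ (g • x₀) • y₀ = g • y₀ := (key _ _).mp this
      rw [hb]; simp only []
      rw [h2, hg]
    have hbequiv : ∀ (g : G) (x : X), b (g • x) = g • b x := by
      intro g x
      have h1 : φ (g • x) • x₀ = (g * φ x) • x₀ := by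
        rw [hφ, mul_smul, hφ]
      have h2 : φ (g • x) • y₀ = (g * φ x) • y₀ := (key _ _).mp h1
      rw [hb]; simp only []
      rw [h2, mul_smul]
    exact ⟨Equiv.ofBijective b ⟨hbinj, hbsurj⟩, hbequiv⟩
  · have hXe : IsEmpty X := not_nonempty_iff.mp hX
    have hYe : IsEmpty Y := by
      rw [← Fintype.card_eq_zero_iff] at *
      omega
    exact ⟨Equiv.equivOfIsEmpty X Y, fun g x => (hXe.false x).elim⟩
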